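/- Under the billiard polygon setup with h the support function of an ellipse and under the Joachimsthal hypothesis, one has 2·Σ_{i=1}^{n} sin²δᵢ = J·L. -/

import Mathlib

open Real

private lemma inner2' (v w : EuclideanSpace ℝ (Fin 2)) :
    (inner ℝ v w : ℝ) = v 0 * w 0 + v 1 * w 1 := by
  simp [PiLp.inner_apply, Fin.sum_univ_two, RCLike.inner_apply, mul_comm]

private lemma norm2' (v : EuclideanSpace ℝ (Fin 2)) :
    ‖v‖ = Real.sqrt ((v 0)^2 + (v 1)^2) := by
  rw [EuclideanSpace.norm_eq]
  simp [Fin.sum_univ_two, sq_abs]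

private lemma norm_eq_inner_of_smul' {u w : EuclideanSpace ℝ (Fin 2)} {t : ℝ} (ht : 0 < t)
    (hu : ‖u‖ = 1) (hw : w = t • u) : ‖w‖ = (inner ℝ w u : ℝ) := by
  subst hw
  rw [norm_smul, hu, real_inner_smul_left, real_inner_self_eq_norm_sq, hu]
  simp [abs_of_pos ht]

private lemma sum_Icc_one' (F : ℕ → ℝ) (k : ℕ) :
    ∑ i ∈ Finset.Icc 1 k, F i = ∑ i ∈ Finset.range k, F (i + 1) := by
  rw [← Finset.Ico_add_one_right_eq_Icc, Finset.sum_Ico_eq_sum_range]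
  exact Finset.sum_congr rfl (fun i _ => by rw [Nat.add_comm])

/-- Corollary: `2 ∑ sin² δᵢ = J · L` for a billiard n-gon in an ellipse. -/
theorem stmt_4
    (a₁ a₂ : ℝ) (ha₁ : 0 < a₁) (ha₂ : 0 < a₂)
    (h : ℝ → ℝ)
    (hh : ∀ x : ℝ, h x = Real.sqrt (a₁ ^ 2 * Real.cos x ^ 2 + a₂ ^ 2 * Real.sin x ^ 2))
    (n : ℕ) (hn : 2 ≤ n)
    (φ ψ δ : ℕ → ℝ)
    (hφ : φ n = φ 0 + 2 * Real.pi)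
    (hψ : ∀ i ∈ Finset.Icc 1 n, ψ i = (φ (i - 1) + φ i) / 2)
    (hδ : ∀ i ∈ Finset.Icc 1 n, δ i = (φ i - φ (i - 1)) / 2)
    (M : ℕ → EuclideanSpace ℝ (Fin 2))
    (hM : ∀ i ∈ Finset.Icc 1 n, M i
        = h (ψ i) • (WithLp.toLp 2 ![Real.cos (ψ i), Real.sin (ψ i)] : EuclideanSpace ℝ (Fin 2))
        + deriv h (ψ i) • (WithLp.toLp 2 ![-Real.sin (ψ i), Real.cos (ψ i)] : EuclideanSpace ℝ (Fin 2)))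
    (hMwrap : M (n + 1) = M 1)
    (chord : ∀ i ∈ Finset.Icc 1 n, ∃ t : ℝ, 0 < t ∧
        M (i + 1) - M i = t • (WithLp.toLp 2 ![-Real.sin (φ i), Real.cos (φ i)] : EuclideanSpace ℝ (Fin 2)))
    (J : ℝ) (hJ : 0 < J)
    (hJoach : ∀ i ∈ Finset.Icc 1 n, Real.sin (δ i) = J * h (ψ i))
    (L : ℝ) (hL : L = ∑ i ∈ Finset.Icc 1 n, ‖M (i + 1) - M i‖)
    : 2 * ∑ i ∈ Finset.Icc 1 n, Real.sin (δ i) ^ 2 = J * L := by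
  obtain ⟨m, rfl⟩ : ∃ m, n = m + 1 := ⟨n - 1, by omega⟩
  set g : ℕ → ℝ := fun i => h (ψ i) * Real.sin (δ i) with hg
  set f : ℕ → ℝ := fun i => deriv h (ψ i) * Real.cos (δ i) with hf
  set u : ℝ → EuclideanSpace ℝ (Fin 2)
    := fun x => (WithLp.toLp 2 ![-Real.sin x, Real.cos x] : EuclideanSpace ℝ (Fin 2)) with hu_def
  have hu : ∀ x : ℝ, ‖u x‖ = 1 := by
    intro x
    rw [norm2', hu_def]
    simp only [Matrix.cons_val_zero, Matrix.cons_val_one, Matrix.head_cons, neg_sq]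
    rw [Real.sin_sq_add_cos_sq, Real.sqrt_one]
  have innerM : ∀ j ∈ Finset.Icc 1 (m + 1), ∀ x : ℝ,
      (inner ℝ (M j) (u x) : ℝ)
        = h (ψ j) * Real.sin (ψ j - x) + deriv h (ψ j) * Real.cos (ψ j - x) := by
    intro j hj x
    rw [hM j hj, hu_def, inner2']
    simp [Real.sin_sub, Real.cos_sub]
    ring
  have key0 : ∀ i ∈ Finset.Icc 1 (m + 1), ‖M (i + 1) - M i‖
      = (inner ℝ (M (i + 1)) (u (φ i)) : ℝ) - (inner ℝ (M i) (u (φ i)) : ℝ) := by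
    intro i hi
    obtain ⟨t, ht, heq⟩ := chord i hi
    have heq' : M (i + 1) - M i = t • u (φ i) := by rw [hu_def]; exact heq
    rw [norm_eq_inner_of_smul' ht (hu (φ i)) heq', inner_sub_left]
  have keyA : ∀ i ∈ Finset.Icc 1 (m + 1),
      (inner ℝ (M i) (u (φ i)) : ℝ) = f i - g i := by
    intro i hi
    rw [innerM i hi (φ i)]
    have h1 : ψ i - φ i = -(δ i) := by
      rw [hψ i hi, hδ i hi]; ring
    rw [h1, Real.sin_neg, Real.cos_neg, hg, hf]
    ring
  have keyB : ∀ i ∈ Finset.Icc 1 m,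
      (inner ℝ (M (i + 1)) (u (φ i)) : ℝ) = g (i + 1) + f (i + 1) := by
    intro i hi
    simp only [Finset.mem_Icc] at hi
    have hi1 : i + 1 ∈ Finset.Icc 1 (m + 1) := by simp only [Finset.mem_Icc]; omega
    rw [innerM (i + 1) hi1 (φ i)]
    have h1 : ψ (i + 1) - φ i = δ (i + 1) := by
      rw [hψ (i + 1) hi1, hδ (i + 1) hi1]
      simp only [Nat.add_sub_cancel]
      ring
    rw [h1, hg, hf]
  have keyC : (inner ℝ (M (m + 1 + 1)) (u (φ (m + 1))) : ℝ) = g 1 + f 1 := by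
    have h1mem : (1 : ℕ) ∈ Finset.Icc 1 (m + 1) := by simp
    rw [hMwrap, innerM 1 h1mem (φ (m + 1))]
    have h1 : ψ 1 - φ (m + 1) = δ 1 - 2 * Real.pi := by
      rw [hψ 1 h1mem, hδ 1 h1mem, hφ]
      norm_num
      ring
    rw [h1, Real.sin_sub_two_pi, Real.cos_sub_two_pi, hg, hf]
  have len1 : ∀ i ∈ Finset.Icc 1 m, ‖M (i + 1) - M i‖
      = g (i + 1) + f (i + 1) + (g i - f i) := by
    intro i hi
    simp only [Finset.mem_Icc] at hi
    have hi' : i ∈ Finset.Icc 1 (m + 1) := by simp only [Finset.mem_Icc]; omega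
    rw [key0 i hi', keyA i hi', keyB i (by simp only [Finset.mem_Icc]; omega)]
    ring
  have len2 : ‖M (m + 1 + 1) - M (m + 1)‖ = g 1 + f 1 + (g (m + 1) - f (m + 1)) := by
    have hi' : m + 1 ∈ Finset.Icc 1 (m + 1) := by simp
    rw [key0 (m + 1) hi', keyA (m + 1) hi', keyC]
    ring
  have hm1 : (1 : ℕ) ≤ m + 1 := by omega
  have hLval : L = 2 * ∑ k ∈ Finset.range (m + 1), g (k + 1) := by
    rw [hL, Finset.sum_Icc_succ_top hm1, len2, Finset.sum_congr rfl len1, sum_Icc_one']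
    have split : ∑ x ∈ Finset.range m, (g (x + 1 + 1) + f (x + 1 + 1) + (g (x + 1) - f (x + 1)))
        = ∑ x ∈ Finset.range m, g (x + 1 + 1) + ∑ x ∈ Finset.range m, f (x + 1 + 1)
          + (∑ x ∈ Finset.range m, g (x + 1) - ∑ x ∈ Finset.range m, f (x + 1)) := by
      rw [Finset.sum_add_distrib, Finset.sum_add_distrib, Finset.sum_sub_distrib]
    have tele : ∑ x ∈ Finset.range m, f (x + 1 + 1) - ∑ x ∈ Finset.range m, f (x + 1)
        = f (m + 1) - f 1 := by
      rw [← Finset.sum_sub_distrib]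
      exact Finset.sum_range_sub (fun k => f (k + 1)) m
    have shift1 : ∑ x ∈ Finset.range (m + 1), g (x + 1)
        = ∑ x ∈ Finset.range m, g (x + 1 + 1) + g 1 :=
      Finset.sum_range_succ' (fun k => g (k + 1)) m
    have shift2 : ∑ x ∈ Finset.range (m + 1), g (x + 1)
        = ∑ x ∈ Finset.range m, g (x + 1) + g (m + 1) :=
      Finset.sum_range_succ (fun k => g (k + 1)) m
    linarith [split, tele, shift1, shift2]
  rw [hLval]
  have key : ∑ i ∈ Finset.Icc 1 (m + 1), Real.sin (δ i) ^ 2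
      = J * ∑ k ∈ Finset.range (m + 1), g (k + 1) := by
    rw [Finset.mul_sum, sum_Icc_one']
    refine Finset.sum_congr rfl ?_
    intro k hk
    simp only [Finset.mem_range] at hk
    have hmem : k + 1 ∈ Finset.Icc 1 (m + 1) := by simp only [Finset.mem_Icc]; omega
    simp only [hg, Nat.add_comm 1 k]
    rw [pow_two, hJoach (k + 1) hmem]
    ring
  rw [key]
  ring
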